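/- Let C be the convex hull of a finite set in a finite-dimensional real vector space (a convex polytope), and let F be a proper face of C (F ≠ C). Let γ be a point of the relative (intrinsic) interior of F and let γ' ∈ C \ F. Then there exist λ ∈ (0, 1] and a face F' of C, whose dimension is strictly greater than the dimension of F, such that λγ' + (1 − λ)γ lies in the relative (intrinsic) interior of F'. -/

import Mathlib

open Module

/-- A face of a convex polytope `C`: either `C` itself, or a nonempty intersection of `C`
with a supporting hyperplane of `C`. -/
def IsPolytopeFace {E : Type*} [NormedAddCommGroup E] [NormedSpace ℝ E]
    (C F : Set E) : Prop :=
  F = C ∨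
    ∃ (l : E →ₗ[ℝ] ℝ) (c : ℝ), l ≠ 0 ∧ (∀ x ∈ C, l x ≤ c) ∧
      F = C ∩ {x | l x = c} ∧ F.Nonempty

section Aux
open Set

variable {E : Type*} [NormedAddCommGroup E] [NormedSpace ℝ E] [FiniteDimensional ℝ E]

/-- Metric characterization of the intrinsic interior. -/
theorem mem_intrinsicInterior_iff' {s : Set E} {x : E} :
    x ∈ intrinsicInterior ℝ s ↔
      x ∈ affineSpan ℝ s ∧ ∃ ε > (0:ℝ), ∀ y ∈ affineSpan ℝ s, dist y x < ε → y ∈ s := by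
  constructor
  · rintro hx
    rw [intrinsicInterior] at hx
    obtain ⟨⟨y, hy⟩, hint, rfl⟩ := hx
    refine ⟨hy, ?_⟩
    rw [mem_interior_iff_mem_nhds, Metric.mem_nhds_iff] at hint
    obtain ⟨ε, hε, hball⟩ := hint
    refine ⟨ε, hε, fun z hz hdz => ?_⟩
    have : (⟨z, hz⟩ : affineSpan ℝ s) ∈ Metric.ball (⟨y, hy⟩ : affineSpan ℝ s) ε := by
      simpa [Metric.mem_ball, Subtype.dist_eq] using hdz
    exact hball this
  · rintro ⟨hx, ε, hε, h⟩
    rw [intrinsicInterior]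
    refine ⟨⟨x, hx⟩, ?_, rfl⟩
    rw [mem_interior_iff_mem_nhds, Metric.mem_nhds_iff]
    exact ⟨ε, hε, fun z hz => h z z.2 (by simpa [Metric.mem_ball, Subtype.dist_eq] using hz)⟩

/-- Supporting hyperplane at a non-relative-interior point of a convex set. -/
theorem exists_support (C : Set E) (hconv : Convex ℝ C) (x : E) (hx : x ∈ C)
    (hni : x ∉ intrinsicInterior ℝ C) :
    ∃ l : E →ₗ[ℝ] ℝ, (∀ y ∈ C, l y ≤ l x) ∧ ∃ y ∈ C, l y < l x := by
  set V : Submodule ℝ E := (affineSpan ℝ C).direction with hV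
  set D : Set V := {v | x + (v : E) ∈ C} with hD
  have hxs : x ∈ affineSpan ℝ C := subset_affineSpan ℝ C hx
  have hD0 : (0 : V) ∈ D := by simpa [hD] using hx
  have hDconv : Convex ℝ D := by
    intro v hv w hw a b ha hb hab
    show x + ((a • v + b • w : V) : E) ∈ C
    have he : x + ((a • v + b • w : V) : E) = a • (x + (v:E)) + b • (x + (w:E)) := by
      push_cast
      have hxx : a • x + b • x = x := by rw [← add_smul, hab, one_smul]
      rw [smul_add, smul_add, add_add_add_comm, hxx]
    rw [he]
    exact hconv hv hw ha hb hab
  -- span of D is everything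
  have hspanD : affineSpan ℝ D = ⊤ := by
    rw [AffineSubspace.affineSpan_eq_top_iff_vectorSpan_eq_top_of_nonempty ℝ V V ⟨0, hD0⟩]
    have h1 : Submodule.span ℝ D ≤ vectorSpan ℝ D := by
      rw [vectorSpan_def]
      apply Submodule.span_mono
      intro d hd
      exact ⟨d, hd, 0, hD0, by simp⟩
    have h2 : Submodule.span ℝ D = ⊤ := by
      apply Submodule.map_injective_of_injective V.injective_subtype
      rw [Submodule.map_span, Submodule.map_top, Submodule.range_subtype]
      apply le_antisymm
      · rw [Submodule.span_le]
        rintro _ ⟨v, _, rfl⟩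
        exact v.2
      · intro v hv
        have hv' : v ∈ vectorSpan ℝ C := by
          rw [← direction_affineSpan]; exact hv
        rw [vectorSpan_def] at hv'
        refine Submodule.span_le.2 ?_ hv'
        rintro _ ⟨p, hp, q, hq, rfl⟩
        have hpD : p - x ∈ V.subtype '' D := by
          refine ⟨⟨p - x, ?_⟩, ?_, rfl⟩
          · simpa using AffineSubspace.vsub_mem_direction (subset_affineSpan ℝ C hp) hxs
          · show x + (p - x) ∈ C; simpa using hp
        have hqD : q - x ∈ V.subtype '' D := by
          refine ⟨⟨q - x, ?_⟩, ?_, rfl⟩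
          · simpa using AffineSubspace.vsub_mem_direction (subset_affineSpan ℝ C hq) hxs
          · show x + (q - x) ∈ C; simpa using hq
        show p -ᵥ q ∈ Submodule.span ℝ (V.subtype '' D)
        have heq : p -ᵥ q = (p - x) - (q - x) := by rw [vsub_eq_sub]; abel
        rw [heq]
        exact sub_mem (Submodule.subset_span hpD) (Submodule.subset_span hqD)
    exact top_le_iff.1 (h2 ▸ h1)
  -- interior of D is nonempty
  have hint_ne : (interior D).Nonempty :=
    hDconv.interior_nonempty_iff_affineSpan_eq_top.2 hspanD
  -- 0 is not in the interior of D
  have h0ni : (0 : V) ∉ interior D := by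
    intro h0
    apply hni
    rw [mem_interior_iff_mem_nhds, Metric.mem_nhds_iff] at h0
    obtain ⟨ε, hε, hball⟩ := h0
    rw [mem_intrinsicInterior_iff']
    refine ⟨hxs, ε, hε, fun y hy hdy => ?_⟩
    have hyV : y - x ∈ V := by
      simpa using AffineSubspace.vsub_mem_direction hy hxs
    have : (⟨y - x, hyV⟩ : V) ∈ Metric.ball (0 : V) ε := by
      simp only [Metric.mem_ball, Subtype.dist_eq, Submodule.coe_zero, dist_zero_right]
      simpa [dist_eq_norm] using hdy
    have := hball this
    show y ∈ C
    have h' : x + (y - x) ∈ C := this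
    simpa using h'
  -- separate 0 from the open convex interior of D
  obtain ⟨f, hf⟩ := geometric_hahn_banach_open_point
    (hDconv.interior (s := D)) isOpen_interior h0ni
  have hf0 : ∀ a ∈ interior D, f a < 0 := by
    intro a ha
    have := hf a ha
    simpa using this
  have hfD : ∀ a ∈ D, f a ≤ 0 := by
    intro a ha
    by_contra hpos
    push_neg at hpos
    obtain ⟨b, hb⟩ := hint_ne
    have hfb : f b < 0 := hf0 b hb
    set t : ℝ := f a / (f a - f b) with ht
    have hd : (0:ℝ) < f a - f b := by linarith
    have ht0 : 0 < t := div_pos hpos hd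
    have ht1 : t ≤ 1 := by
      rw [div_le_one hd]; linarith
    have hz : (1 - t) • a + t • b ∈ interior D :=
      hDconv.combo_self_interior_mem_interior ha hb
        (by linarith) ht0 (by ring)
    have hfz : f ((1 - t) • a + t • b) < 0 := hf0 _ hz
    have hcomp : f ((1 - t) • a + t • b) = (1 - t) * f a + t * f b := by
      simp [map_add, map_smul, smul_eq_mul]
    rw [hcomp] at hfz
    have : t * (f a - f b) = f a := by
      rw [ht]; field_simp
    nlinarith
  -- extend f to E via a projection
  obtain ⟨W, hW⟩ := Submodule.exists_isCompl V
  set π := V.linearProjOfIsCompl W hW with hπ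
  refine ⟨(f : V →ₗ[ℝ] ℝ).comp π, ?_, ?_⟩
  · intro y hy
    have hyV : y - x ∈ V := by
      simpa using AffineSubspace.vsub_mem_direction (subset_affineSpan ℝ C hy) hxs
    have hD' : (⟨y - x, hyV⟩ : V) ∈ D := by
      show x + (y - x) ∈ C; simpa using hy
    have hπeq : π y - π x = (⟨y - x, hyV⟩ : V) := by
      have := Submodule.linearProjOfIsCompl_apply_left hW (⟨y - x, hyV⟩ : V)
      rw [← this]
      have : π y - π x = π (y - x) := by rw [map_sub]
      rw [this]
      rfl
    have : f (π y) - f (π x) = f (⟨y - x, hyV⟩ : V) := by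
      rw [← map_sub, hπeq]
    have := hfD _ hD'
    simp only [LinearMap.coe_comp, Function.comp_apply, ContinuousLinearMap.coe_coe]
    linarith [‹f (π y) - f (π x) = f (⟨y - x, hyV⟩ : V)›, this]
  · obtain ⟨a, ha⟩ := hint_ne
    have haD : a ∈ D := interior_subset ha
    refine ⟨x + (a : E), haD, ?_⟩
    have haV : (x + (a:E)) - x ∈ V := by simpa using a.2
    have hπeq : π (x + (a:E)) - π x = a := by
      have h1 : π (x + (a:E)) - π x = π ((x + (a:E)) - x) := by rw [map_sub]
      have h2 : ((x + (a:E)) - x) = (a : E) := by abel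
      rw [h1]
      conv_lhs => rw [show ((x + (a:E)) - x) = ((a : V) : E) by exact h2]
      exact Submodule.linearProjOfIsCompl_apply_left hW a
    have hfa : f a < 0 := hf0 a ha
    have : f (π (x + (a:E))) - f (π x) = f a := by rw [← map_sub, hπeq]
    simp only [LinearMap.coe_comp, Function.comp_apply, ContinuousLinearMap.coe_coe]
    linarith

theorem hull_inter_hyperplane (S : Finset E) (l : E →ₗ[ℝ] ℝ) (c : ℝ)
    (h : ∀ s ∈ S, l s ≤ c) :
    convexHull ℝ (S : Set E) ∩ {x | l x = c} =
      convexHull ℝ ((S.filter fun s => l s = c : Finset E) : Set E) := by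
  classical
  apply Set.Subset.antisymm
  · rintro x ⟨hx, hxc⟩
    rw [Finset.convexHull_eq] at hx
    obtain ⟨w, hw0, hw1, hwx⟩ := hx
    have hxsum : x = ∑ i ∈ S, w i • i := by
      rw [← hwx, Finset.centerMass_eq_of_sum_1 _ _ hw1]; rfl
    have hlx : ∑ i ∈ S, w i * (c - l i) = 0 := by
      have : l x = ∑ i ∈ S, w i * l i := by
        rw [hxsum, map_sum]; simp [mul_comm]
      have hsum : ∑ i ∈ S, w i * c = c := by
        rw [← Finset.sum_mul, hw1, one_mul]
      calc ∑ i ∈ S, w i * (c - l i) = (∑ i ∈ S, w i * c) - ∑ i ∈ S, w i * l i := by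
            rw [← Finset.sum_sub_distrib]; exact Finset.sum_congr rfl (fun i _ => by ring)
        _ = c - l x := by rw [hsum, this]
        _ = 0 := by rw [hxc]; ring
    have hkey : ∀ i ∈ S, w i * (c - l i) = 0 := by
      intro i hi
      exact (Finset.sum_eq_zero_iff_of_nonneg (fun j hj =>
        mul_nonneg (hw0 j hj) (sub_nonneg.2 (h j hj)))).1 hlx i hi
    set T := S.filter fun s => l s = c with hT
    have hzero : ∀ i ∈ S, i ∉ T → w i = 0 := by
      intro i hi hiT
      rcases mul_eq_zero.1 (hkey i hi) with h0 | h0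
      · exact h0
      · exact absurd (Finset.mem_filter.2 ⟨hi, by linarith [sub_eq_zero.1 h0]⟩) hiT
    have hsumT : ∑ i ∈ T, w i = 1 := by
      rw [← hw1]; exact (Finset.sum_subset (Finset.filter_subset _ _) hzero)
    have hxT : x = ∑ i ∈ T, w i • i := by
      rw [hxsum]
      exact (Finset.sum_subset (Finset.filter_subset _ _)
        (fun i hi hiT => by rw [hzero i hi hiT, zero_smul])).symm
    have := Finset.centerMass_mem_convexHull T
      (fun i hi => hw0 i (Finset.mem_of_mem_filter i hi)) (by rw [hsumT]; norm_num)
      (fun i hi => Finset.mem_coe.2 hi)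
    rwa [Finset.centerMass_eq_of_sum_1 _ _ hsumT, ← hxT] at this
  · apply Set.subset_inter
    · exact convexHull_mono (by intro a ha; simp only [Finset.coe_filter, Set.mem_setOf_eq] at ha; exact ha.1)
    · apply convexHull_min
      · intro s hs
        simp only [Finset.coe_filter, Set.mem_setOf_eq] at hs
        exact hs.2
      · intro a ha b hb ta tb hta htb htab
        simp only [Set.mem_setOf_eq] at ha hb ⊢
        simp [ha, hb, ← add_mul, htab]

/-- Every point of a polytope lies in the relative interior of some face. -/
theorem exists_relint_face (S : Finset E) :
    ∀ x : E, x ∈ convexHull ℝ (S : Set E) →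
      ∃ F', IsPolytopeFace (convexHull ℝ (S : Set E)) F' ∧ x ∈ intrinsicInterior ℝ F' := by
  classical
  induction S using Finset.strongInduction with
  | _ S ih =>
  intro x hx
  by_cases hrel : x ∈ intrinsicInterior ℝ (convexHull ℝ (S : Set E))
  · exact ⟨_, Or.inl rfl, hrel⟩
  obtain ⟨l, hl1, y, hy, hy2⟩ :=
    exists_support _ (convex_convexHull ℝ _) x hx hrel
  set c := l x with hc
  have hl0 : l ≠ 0 := by
    intro h
    rw [h] at hy2 hc
    rw [hc] at hy2
    simp at hy2
  have hSle : ∀ s ∈ S, l s ≤ c := fun s hs => hl1 s (subset_convexHull ℝ _ hs)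
  have hs0 : ∃ s₀ ∈ S, l s₀ ≠ c := by
    by_contra h
    push_neg at h
    have hsub : convexHull ℝ (S : Set E) ⊆ {z | l z = c} :=
      convexHull_min (fun s hs => h s hs) (convex_hyperplane l.isLinear c)
    have := hsub hy
    simp only [Set.mem_setOf_eq] at this
    exact absurd this (ne_of_lt hy2)
  obtain ⟨s₀, hs₀S, hs₀⟩ := hs0
  set S' := S.filter (fun s => l s = c) with hS'
  have hSS' : S' ⊂ S := by
    refine ⟨Finset.filter_subset _ _, fun hsub => ?_⟩
    exact hs₀ ((Finset.mem_filter.1 (hsub hs₀S)).2)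
  have hhull : convexHull ℝ (S : Set E) ∩ {z | l z = c} = convexHull ℝ (S' : Set E) :=
    hull_inter_hyperplane S l c hSle
  have hxS' : x ∈ convexHull ℝ (S' : Set E) := by
    rw [← hhull]; exact ⟨hx, rfl⟩
  obtain ⟨F'', hface, hrelint⟩ := ih S' hSS' x hxS'
  have hxF'' : x ∈ F'' := intrinsicInterior_subset hrelint
  rcases hface with heq | ⟨l₂, c₂, hl₂0, hbound₂, hFeq, hFne⟩
  · -- F'' is the whole of hull S'
    refine ⟨F'', Or.inr ⟨l, c, hl0, hl1, ?_, ⟨x, hxF''⟩⟩, hrelint⟩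
    rw [heq, ← hhull]
  · -- F'' is a proper face of hull S'; glue the functionals
    have hS'le : ∀ s ∈ S', l₂ s ≤ c₂ := fun s hs =>
      hbound₂ s (subset_convexHull ℝ _ hs)
    set B := S.filter (fun s => l s ≠ c) with hB
    obtain ⟨M, hM⟩ := Finset.exists_le (B.image (fun s => (l₂ s - c₂) / (c - l s)))
    set N₁ : ℝ := M + 1 with hN₁
    set N : ℝ := if l₂ + N₁ • l = 0 then N₁ + 1 else N₁ with hN
    have hNge : N₁ ≤ N := by
      rw [hN]; split <;> linarith
    have hl₃0 : l₂ + N • l ≠ 0 := by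
      rw [hN]
      split
      · rename_i h0
        intro h1
        apply hl0
        have h2 : l₂ + (N₁ + 1) • l - (l₂ + N₁ • l) = l := by
          rw [add_smul, one_smul]; abel
        rw [← h2, h1, h0, sub_zero]
      · rename_i h0; exact h0
    set l₃ : E →ₗ[ℝ] ℝ := l₂ + N • l with hl₃
    set c₃ : ℝ := c₂ + N * c with hc₃
    have key : ∀ s ∈ S, l₃ s ≤ c₃ ∧ (l₃ s = c₃ ↔ (l s = c ∧ l₂ s = c₂)) := by
      intro s hs
      by_cases hsc : l s = c
      · have hsS' : s ∈ S' := Finset.mem_filter.2 ⟨hs, hsc⟩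
        have h2 : l₂ s ≤ c₂ := hS'le s hsS'
        have hval : l₃ s = l₂ s + N * c := by
          simp only [hl₃, LinearMap.add_apply, LinearMap.smul_apply, smul_eq_mul, hsc]
        refine ⟨by rw [hval, hc₃]; linarith, ?_⟩
        rw [hval, hc₃]
        constructor
        · intro h; exact ⟨hsc, by linarith⟩
        · rintro ⟨-, h⟩; rw [h]
      · have hlt : l s < c := lt_of_le_of_ne (hSle s hs) hsc
        have hsB : s ∈ B := Finset.mem_filter.2 ⟨hs, hsc⟩
        have hMs : (l₂ s - c₂) / (c - l s) ≤ M :=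
          hM _ (Finset.mem_image_of_mem _ hsB)
        have hpos : 0 < c - l s := by linarith
        have hlt2 : l₂ s - c₂ < N * (c - l s) := by
          rw [div_le_iff₀ hpos] at hMs
          have : M * (c - l s) < N * (c - l s) := by
            apply mul_lt_mul_of_pos_right _ hpos
            linarith
          linarith
        have hstrict : l₃ s < c₃ := by
          simp only [hl₃, LinearMap.add_apply, LinearMap.smul_apply, smul_eq_mul, hc₃]
          nlinarith
        refine ⟨hstrict.le, ?_⟩
        constructor
        · intro h; exact absurd h (ne_of_lt hstrict)
        · rintro ⟨h, -⟩; exact absurd h hsc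
    have hbound₃ : ∀ z ∈ convexHull ℝ (S : Set E), l₃ z ≤ c₃ := by
      intro z hz
      have : convexHull ℝ (S : Set E) ⊆ {w | l₃ w ≤ c₃} :=
        convexHull_min (fun s hs => (key s hs).1) (convex_halfSpace_le l₃.isLinear c₃)
      exact this hz
    have hfilter_eq : S.filter (fun s => l₃ s = c₃) = S'.filter (fun s => l₂ s = c₂) := by
      ext s
      simp only [Finset.mem_filter, hS']
      constructor
      · rintro ⟨hs, h3⟩
        obtain ⟨h1, h2⟩ := (key s hs).2.1 h3
        exact ⟨⟨hs, h1⟩, h2⟩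
      · rintro ⟨⟨hs, h1⟩, h2⟩
        exact ⟨hs, (key s hs).2.2 ⟨h1, h2⟩⟩
    have hF''eq : F'' = convexHull ℝ (S : Set E) ∩ {z | l₃ z = c₃} := by
      rw [hFeq, hull_inter_hyperplane S' l₂ c₂ hS'le,
        hull_inter_hyperplane S l₃ c₃ (fun s hs => (key s hs).1), hfilter_eq]
    exact ⟨F'', Or.inr ⟨l₃, c₃, hl₃0, hbound₃, hF''eq, ⟨x, hxF''⟩⟩, hrelint⟩

theorem IsPolytopeFace.isExtreme {C F : Set E} (hC : Convex ℝ C) (h : IsPolytopeFace C F) :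
    IsExtreme ℝ C F := by
  rcases h with rfl | ⟨l, c, -, hbound, rfl, -⟩
  · exact IsExtreme.rfl
  constructor
  · exact Set.inter_subset_left
  rintro x1 hx1 x2 hx2 z ⟨hzC, hzc⟩ ⟨a, b, ha, hb, hab, hz⟩
  simp only [Set.mem_setOf_eq] at hzc
  have h1 : l x1 ≤ c := hbound x1 hx1
  have h2 : l x2 ≤ c := hbound x2 hx2
  have hsum : a * l x1 + b * l x2 = c := by
    rw [← hzc, ← hz]; simp [map_add, map_smul, smul_eq_mul]
  have hcc : a * c + b * c = c := by rw [← add_mul, hab, one_mul]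
  have he1 : l x1 = c := by
    by_contra h
    have hlt : a * l x1 < a * c := mul_lt_mul_of_pos_left (lt_of_le_of_ne h1 h) ha
    have h2' : b * l x2 ≤ b * c := mul_le_mul_of_nonneg_left h2 hb.le
    linarith
  have he2 : l x2 = c := by
    by_contra h
    have hlt : b * l x2 < b * c := mul_lt_mul_of_pos_left (lt_of_le_of_ne h2 h) hb
    have h1' : a * l x1 ≤ a * c := mul_le_mul_of_nonneg_left h1 ha.le
    linarith
  exact ⟨hx1, he1⟩

/-- A face containing a relative-interior point of a convex subset contains the subset. -/
theorem subset_face_of_relint_mem {C F F' : Set E} (hF'ext : IsExtreme ℝ C F')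
    (hFC : F ⊆ C) {γ : E} (hγ : γ ∈ intrinsicInterior ℝ F) (hγF' : γ ∈ F') : F ⊆ F' := by
  intro y hy
  rcases eq_or_ne y γ with rfl | hne
  · exact hγF'
  rw [mem_intrinsicInterior_iff'] at hγ
  obtain ⟨hγsp, ε, hε, hball⟩ := hγ
  have hysp : y ∈ affineSpan ℝ F := subset_affineSpan ℝ F hy
  -- choose t > 0 small
  set t : ℝ := ε / (2 * (‖γ - y‖ + 1)) with ht
  have hden : (0:ℝ) < ‖γ - y‖ + 1 := by positivity
  have ht0 : 0 < t := by positivity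
  set z : E := γ + t • (γ - y) with hz
  have hzsp : z ∈ affineSpan ℝ F := by
    have := AffineSubspace.smul_vsub_vadd_mem (affineSpan ℝ F) t hγsp hysp hγsp
    simpa [hz, vsub_eq_sub, vadd_eq_add, add_comm] using this
  have hdist : dist z γ < ε := by
    rw [hz, dist_eq_norm]
    simp only [add_sub_cancel_left, norm_smul, Real.norm_eq_abs, abs_of_pos ht0]
    have htval : t * (‖γ - y‖ + 1) = ε / 2 := by
      rw [ht]; field_simp
    calc t * ‖γ - y‖ < t * (‖γ - y‖ + 1) := by
          exact mul_lt_mul_of_pos_left (by linarith) ht0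
      _ = ε / 2 := htval
      _ < ε := by linarith
  have hzF : z ∈ F := hball z hzsp hdist
  -- γ is in the open segment between y and z
  have hseg : γ ∈ openSegment ℝ y z := by
    have h1t : (0:ℝ) < 1 + t := by positivity
    refine ⟨t / (1 + t), 1 / (1 + t), by positivity, by positivity, ?_, ?_⟩
    · field_simp; ring
    · rw [hz]
      match_scalars <;> field_simp <;> ring
  exact hF'ext.2 (hFC hy) (hFC hzF) hγF' hseg

/-- The hyperplane `{z | l z = c}` as an affine subspace. -/
def hyperplaneAS (l : E →ₗ[ℝ] ℝ) (c : ℝ) : AffineSubspace ℝ E where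
  carrier := {z | l z = c}
  smul_vsub_vadd_mem' := by
    intro t p1 p2 p3 h1 h2 h3
    simp only [Set.mem_setOf_eq] at h1 h2 h3 ⊢
    simp [vsub_eq_sub, vadd_eq_add, map_add, map_smul, map_sub, h1, h2, h3]

end Aux

/-- **Lemma 2.5.** Let `C` be the convex hull of a finite set in a finite-dimensional real
vector space and `F` a proper face of `C`.  If `γ` lies in the relative interior of `F`
and `γ' ∈ C \ F`, then for some `λ ∈ (0,1]` the point `λ γ' + (1-λ) γ` lies in the
relative interior of a face of `C` of strictly larger dimension than `F`. -/
theorem segment_escapes_to_larger_face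
    {E : Type*} [NormedAddCommGroup E] [NormedSpace ℝ E] [FiniteDimensional ℝ E]
    (S : Finset E) (C : Set E) (hC : C = convexHull ℝ (S : Set E))
    (F : Set E) (hF : IsPolytopeFace C F) (hFproper : F ≠ C)
    (γ : E) (hγ : γ ∈ intrinsicInterior ℝ F)
    (γ' : E) (hγ' : γ' ∈ C \ F) :
    ∃ lam : ℝ, lam ∈ Set.Ioc (0 : ℝ) 1 ∧
      ∃ F' : Set E, IsPolytopeFace C F' ∧
        finrank ℝ (affineSpan ℝ F).direction < finrank ℝ (affineSpan ℝ F').direction ∧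
        lam • γ' + (1 - lam) • γ ∈ intrinsicInterior ℝ F' := by
  subst hC
  set C := convexHull ℝ (S : Set E) with hC
  rcases hF with h | ⟨l, c, hl0, hbound, hFeq, hFne⟩
  · exact absurd h hFproper
  have hγF : γ ∈ F := intrinsicInterior_subset hγ
  have hCconv : Convex ℝ C := convex_convexHull ℝ _
  obtain ⟨hγ'C, hγ'F⟩ := hγ'
  have hγC : γ ∈ C := by rw [hFeq] at hγF; exact hγF.1
  set x : E := (1/2 : ℝ) • γ' + (1 - (1/2 : ℝ)) • γ with hx
  have hxC : x ∈ C := hCconv hγ'C hγC (by norm_num) (by norm_num) (by norm_num)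
  obtain ⟨F', hface, hrelint⟩ := exists_relint_face S x hxC
  have hxF' : x ∈ F' := intrinsicInterior_subset hrelint
  have hext : IsExtreme ℝ C F' := hface.isExtreme hCconv
  have hseg : x ∈ openSegment ℝ γ' γ :=
    ⟨1/2, 1 - 1/2, by norm_num, by norm_num, by norm_num, rfl⟩
  obtain ⟨hγ'F', hγF'⟩ : γ' ∈ F' ∧ γ ∈ F' :=
    ⟨hext.2 hγ'C hγC hxF' hseg, hext.2 hγC hγ'C hxF' (by rwa [openSegment_symm] at hseg)⟩
  have hFC : F ⊆ C := by rw [hFeq]; exact Set.inter_subset_left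
  have hFsubF' : F ⊆ F' := subset_face_of_relint_mem hext hFC hγ hγF'
  have hF'C : F' ⊆ C := hext.1
  refine ⟨1/2, ⟨by norm_num, by norm_num⟩, F', hface, ?_, hrelint⟩
  have hle : (affineSpan ℝ F).direction ≤ (affineSpan ℝ F').direction :=
    AffineSubspace.direction_le (affineSpan_mono ℝ hFsubF')
  rcases lt_or_ge (finrank ℝ (affineSpan ℝ F).direction)
    (finrank ℝ (affineSpan ℝ F').direction) with hlt | hge
  · exact hlt
  exfalso
  have heq : (affineSpan ℝ F).direction = (affineSpan ℝ F').direction :=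
    Submodule.eq_of_le_of_finrank_le hle hge
  have hspan_eq : affineSpan ℝ F = affineSpan ℝ F' :=
    AffineSubspace.ext_of_direction_eq heq
      ⟨γ, subset_affineSpan ℝ F hγF, subset_affineSpan ℝ F' hγF'⟩
  have hFsub : F ⊆ {z | l z = c} := by rw [hFeq]; exact Set.inter_subset_right
  have hHle : affineSpan ℝ F ≤ hyperplaneAS l c := affineSpan_le.2 hFsub
  have hF'hyp : F' ⊆ {z | l z = c} := fun z hz =>
    hHle (hspan_eq ▸ subset_affineSpan ℝ F' hz)
  have hF'F : F' ⊆ F := by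
    rw [hFeq]; exact fun z hz => ⟨hF'C hz, hF'hyp hz⟩
  exact hγ'F (hF'F hγ'F')
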